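/- Let C be a pointed generating closed convex cone in a finite-dimensional real vector space V and G a subgroup of GL(V) preserving C. The following are equivalent: (1) G has a fixed point in the interior of C; (2) G is bounded in GL(V) (its closure is compact); (3) every G-orbit in Int(C) is bounded; (4) some G-orbit in Int(C) is bounded. -/

import Mathlib

open Set Topology

section Aux

variable {V : Type*} [NormedAddCommGroup V] [NormedSpace ℝ V] [FiniteDimensional ℝ V]

/-- Normality of a pointed closed cone: a uniform bound `‖x‖ ≤ M ‖u‖` whenever
`u - x ∈ C` and `u + x ∈ C`. -/
private lemma cone_normality (C : Set V) (hCclosed : IsClosed C)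
    (hCcone : ∀ (t : ℝ) (v : V), 0 ≤ t → v ∈ C → t • v ∈ C)
    (hCpointed : C ∩ (-C) = {(0 : V)}) :
    ∃ M : ℝ, 0 < M ∧ ∀ u x : V, u - x ∈ C → u + x ∈ C → ‖x‖ ≤ M * ‖u‖ := by
  obtain ⟨δ, hδpos, hδ⟩ :
      ∃ δ : ℝ, 0 < δ ∧ ∀ u x : V, ‖u‖ ≤ 1 → ‖x‖ = 1 → u - x ∈ C → u + x ∈ C → δ ≤ ‖u‖ := by
    set K : Set (V × V) :=
      {p : V × V | (‖p.1‖ ≤ 1 ∧ ‖p.2‖ = 1) ∧ (p.1 - p.2 ∈ C ∧ p.1 + p.2 ∈ C)} with hK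
    have hKclosed : IsClosed K := by
      refine IsClosed.inter (IsClosed.inter ?_ ?_) (IsClosed.inter ?_ ?_)
      · exact isClosed_le continuous_fst.norm continuous_const
      · exact isClosed_eq continuous_snd.norm continuous_const
      · exact hCclosed.preimage (continuous_fst.sub continuous_snd)
      · exact hCclosed.preimage (continuous_fst.add continuous_snd)
    have hKbdd : Bornology.IsBounded K := by
      refine Metric.isBounded_closedBall (x := (0 : V × V)) (r := 1) |>.subset ?_
      rintro ⟨u, x⟩ ⟨⟨h1, h2⟩, -⟩
      simpa [Prod.norm_def] using max_le h1 h2.le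
    rcases K.eq_empty_or_nonempty with hKe | hKne
    · refine ⟨1, one_pos, fun u x hu hx h1 h2 => ?_⟩
      exact absurd (show (u, x) ∈ K from ⟨⟨hu, hx⟩, h1, h2⟩) (by simp [hKe])
    · obtain ⟨p₀, hp₀K, hp₀min⟩ :=
        (Metric.isCompact_of_isClosed_isBounded hKclosed hKbdd).exists_isMinOn hKne
          continuous_fst.norm.continuousOn
      refine ⟨‖p₀.1‖, ?_, fun u x hu hx h1 h2 => hp₀min (⟨⟨hu, hx⟩, h1, h2⟩ : (u, x) ∈ K)⟩
      rcases (norm_nonneg p₀.1).lt_or_eq with h | h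
      · exact h
      exfalso
      have hz : p₀.1 = 0 := by rwa [eq_comm, norm_eq_zero] at h
      obtain ⟨⟨-, hx1⟩, hm, hp⟩ := hp₀K
      rw [hz] at hm hp
      rw [zero_sub] at hm
      rw [zero_add] at hp
      have hmem : p₀.2 ∈ C ∩ (-C) := ⟨hp, Set.mem_neg.mpr hm⟩
      rw [hCpointed, Set.mem_singleton_iff] at hmem
      rw [hmem, norm_zero] at hx1
      exact one_ne_zero hx1.symm
  refine ⟨max 1 δ⁻¹, lt_of_lt_of_le one_pos (le_max_left _ _), fun u x h1 h2 => ?_⟩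
  rcases eq_or_ne x 0 with rfl | hx0
  · have : (0 : ℝ) ≤ max 1 δ⁻¹ * ‖u‖ :=
      mul_nonneg (le_trans zero_le_one (le_max_left _ _)) (norm_nonneg u)
    simpa using this
  have hxpos : 0 < ‖x‖ := norm_pos_iff.mpr hx0
  rcases le_or_gt ‖x‖ ‖u‖ with h | h
  · calc ‖x‖ ≤ 1 * ‖u‖ := by linarith
      _ ≤ max 1 δ⁻¹ * ‖u‖ := mul_le_mul_of_nonneg_right (le_max_left _ _) (norm_nonneg u)
  · have hm : ‖x‖⁻¹ • u - ‖x‖⁻¹ • x ∈ C := by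
      rw [← smul_sub]; exact hCcone _ _ (inv_nonneg.mpr (norm_nonneg x)) h1
    have hp : ‖x‖⁻¹ • u + ‖x‖⁻¹ • x ∈ C := by
      rw [← smul_add]; exact hCcone _ _ (inv_nonneg.mpr (norm_nonneg x)) h2
    have hun : ‖‖x‖⁻¹ • u‖ ≤ 1 := by
      rw [norm_smul, norm_inv, norm_norm, ← inv_mul_cancel₀ hxpos.ne']
      exact mul_le_mul_of_nonneg_left h.le (inv_nonneg.mpr (norm_nonneg x))
    have hxn : ‖‖x‖⁻¹ • x‖ = 1 := by
      rw [norm_smul, norm_inv, norm_norm, inv_mul_cancel₀ hxpos.ne']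
    have hkey := hδ _ _ hun hxn hm hp
    rw [norm_smul, norm_inv, norm_norm] at hkey
    have hdx : δ * ‖x‖ ≤ ‖u‖ := by
      have h' := mul_le_mul_of_nonneg_right hkey hxpos.le
      rwa [mul_right_comm, inv_mul_cancel₀ hxpos.ne', one_mul] at h'
    calc ‖x‖ = δ * ‖x‖ / δ := by field_simp
      _ ≤ ‖u‖ / δ := by gcongr
      _ = δ⁻¹ * ‖u‖ := by rw [div_eq_inv_mul]
      _ ≤ max 1 δ⁻¹ * ‖u‖ := mul_le_mul_of_nonneg_right (le_max_right _ _) (norm_nonneg u)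

end Aux

/-- Lemma 3.2 (eleco): for a subgroup `G` of `GL(V)` preserving a pointed generating
closed convex cone `C` in a finite-dimensional real vector space, the following are
equivalent: (1) `G` has a fixed point in the interior of `C`; (2) `G` is bounded
(its closure is compact); (3) every `G`-orbit in `Int C` is bounded;
(4) some `G`-orbit in `Int C` is bounded. -/
theorem cone_group_elliptic_tfae
    {V : Type*} [NormedAddCommGroup V] [NormedSpace ℝ V] [FiniteDimensional ℝ V]
    (C : Set V) (hCclosed : IsClosed C) (hCconv : Convex ℝ C)
    (hCcone : ∀ (t : ℝ) (v : V), 0 ≤ t → v ∈ C → t • v ∈ C)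
    (hCpointed : C ∩ (-C) = {(0 : V)})
    (hCgen : ∀ v : V, ∃ c₁ ∈ C, ∃ c₂ ∈ C, v = c₁ - c₂)
    (G : Subgroup (V ≃L[ℝ] V))
    (hCinv : ∀ g ∈ G, g '' C = C) :
    List.TFAE
      [ ∃ v ∈ interior C, ∀ g ∈ G, g v = v,
        IsCompact (closure ((fun g : V ≃L[ℝ] V => (g : V →L[ℝ] V)) '' (G : Set (V ≃L[ℝ] V)))),
        ∀ v ∈ interior C, Bornology.IsBounded ((fun g : V ≃L[ℝ] V => g v) '' (G : Set (V ≃L[ℝ] V))),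
        ∃ v ∈ interior C, Bornology.IsBounded ((fun g : V ≃L[ℝ] V => g v) '' (G : Set (V ≃L[ℝ] V))) ] := by
  classical
  have hzero : (0 : V) ∈ C := by
    obtain ⟨c₁, hc₁, -⟩ := hCgen 0
    simpa using hCcone 0 c₁ le_rfl hc₁
  have hmapC : ∀ g ∈ G, ∀ c ∈ C, (g : V ≃L[ℝ] V) c ∈ C := fun g hg c hc => by
    rw [← hCinv g hg]; exact mem_image_of_mem _ hc
  have hIntne : (interior C).Nonempty := by
    rw [hCconv.interior_nonempty_iff_affineSpan_eq_top, eq_top_iff]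
    intro v _
    obtain ⟨c₁, hc₁, c₂, hc₂, hv⟩ := hCgen v
    have := AffineSubspace.smul_vsub_vadd_mem (affineSpan ℝ C) (1 : ℝ)
      (subset_affineSpan ℝ C hc₁) (subset_affineSpan ℝ C hc₂) (subset_affineSpan ℝ C hzero)
    simpa [vsub_eq_sub, vadd_eq_add, ← hv] using this
  tfae_have 1 → 4 := by
    rintro ⟨v, hv, hfix⟩
    refine ⟨v, hv, Bornology.IsBounded.subset (Bornology.isBounded_singleton (x := v)) ?_⟩
    rintro - ⟨g, hg, rfl⟩
    simp [hfix g hg]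
  tfae_have 4 → 2 := by
    rintro ⟨v, hv, hbd⟩
    obtain ⟨M, hMpos, hnorm⟩ := cone_normality C hCclosed hCcone hCpointed
    obtain ⟨ε, hε, hball⟩ := Metric.isOpen_iff.mp isOpen_interior v hv
    obtain ⟨R, hR⟩ := isBounded_iff_forall_norm_le.mp hbd
    set R' := max R 0 with hR'def
    have hR' : ∀ g ∈ G, ‖(g : V ≃L[ℝ] V) v‖ ≤ R' := fun g hg =>
      le_trans (hR _ (mem_image_of_mem _ hg)) (le_max_left _ _)
    have hR'0 : (0 : ℝ) ≤ R' := le_max_right _ _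
    have hc0 : (0 : ℝ) ≤ 2 * M * R' / ε := by positivity
    have hop : ∀ g ∈ G, ‖(g : V →L[ℝ] V)‖ ≤ 2 * M * R' / ε := by
      intro g hg
      refine ContinuousLinearMap.opNorm_le_bound _ hc0 (fun x => ?_)
      rcases eq_or_ne x 0 with rfl | hx0
      · simp
      have hxpos : 0 < ‖x‖ := norm_pos_iff.mpr hx0
      set y := (ε / (2 * ‖x‖)) • x with hy
      have hyn : ‖y‖ = ε / 2 := by
        rw [hy, norm_smul, Real.norm_eq_abs, abs_of_pos (by positivity)]
        field_simp
      have hvy1 : v + y ∈ C := by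
        refine interior_subset (hball ?_)
        simp only [Metric.mem_ball, dist_eq_norm, add_sub_cancel_left, hyn]
        linarith
      have hvy2 : v - y ∈ C := by
        refine interior_subset (hball ?_)
        have : ‖v - y - v‖ = ε / 2 := by
          rw [show v - y - v = -y by abel, norm_neg, hyn]
        simp only [Metric.mem_ball, dist_eq_norm, this]
        linarith
      have h1 : (g : V ≃L[ℝ] V) v - (g : V ≃L[ℝ] V) y ∈ C := by
        rw [← map_sub]; exact hmapC g hg _ hvy2
      have h2 : (g : V ≃L[ℝ] V) v + (g : V ≃L[ℝ] V) y ∈ C := by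
        rw [← map_add]; exact hmapC g hg _ hvy1
      have hgy : ‖(g : V ≃L[ℝ] V) y‖ ≤ M * R' := by
        refine le_trans (hnorm _ _ h1 h2) ?_
        exact mul_le_mul_of_nonneg_left (hR' g hg) hMpos.le
      have hxy : x = (2 * ‖x‖ / ε) • y := by
        rw [hy, smul_smul, show 2 * ‖x‖ / ε * (ε / (2 * ‖x‖)) = 1 by field_simp, one_smul]
      have hcoe : (g : V →L[ℝ] V) x = (g : V ≃L[ℝ] V) x := rfl
      calc ‖(g : V →L[ℝ] V) x‖ = ‖(g : V ≃L[ℝ] V) ((2 * ‖x‖ / ε) • y)‖ := by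
            rw [hcoe, ← hxy]
        _ = (2 * ‖x‖ / ε) * ‖(g : V ≃L[ℝ] V) y‖ := by
            rw [map_smul, norm_smul, Real.norm_eq_abs, abs_of_nonneg (by positivity)]
        _ ≤ (2 * ‖x‖ / ε) * (M * R') := by
            exact mul_le_mul_of_nonneg_left hgy (by positivity)
        _ = 2 * M * R' / ε * ‖x‖ := by field_simp
    have hsub : (fun g : V ≃L[ℝ] V => (g : V →L[ℝ] V)) '' (G : Set (V ≃L[ℝ] V)) ⊆
        Metric.closedBall 0 (2 * M * R' / ε) := by
      rintro - ⟨g, hg, rfl⟩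
      simpa [mem_closedBall_zero_iff] using hop g hg
    exact (Metric.isBounded_closedBall.subset hsub).isCompact_closure
  tfae_have 2 → 3 := by
    intro h2 v _
    have hcont : Continuous fun A : V →L[ℝ] V => A v :=
      (ContinuousLinearMap.apply ℝ V v).continuous
    have hsub : (fun g : V ≃L[ℝ] V => g v) '' (G : Set (V ≃L[ℝ] V)) ⊆
        (fun A : V →L[ℝ] V => A v) ''
          (closure ((fun g : V ≃L[ℝ] V => (g : V →L[ℝ] V)) '' (G : Set (V ≃L[ℝ] V)))) := by
      rintro - ⟨g, hg, rfl⟩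
      exact ⟨(g : V →L[ℝ] V), subset_closure (mem_image_of_mem _ hg), rfl⟩
    exact ((h2.image hcont).isBounded).subset hsub
  tfae_have 3 → 4 := by
    intro h3
    obtain ⟨v, hv⟩ := hIntne
    exact ⟨v, hv, h3 v hv⟩
  tfae_have 2 → 1 := by
    intro h2
    obtain ⟨v₀, hv₀⟩ := hIntne
    set S : Set (V →L[ℝ] V) :=
      (fun g : V ≃L[ℝ] V => (g : V →L[ℝ] V)) '' (G : Set (V ≃L[ℝ] V)) with hSdef
    let ι : (V ≃L[ℝ] V) ≃* (V →L[ℝ] V)ˣ := (ContinuousLinearEquiv.unitsEquiv ℝ V).symm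
    let G' : Subgroup (V →L[ℝ] V)ˣ := G.map ι.toMonoidHom
    let H : Subgroup (V →L[ℝ] V)ˣ := G'.topologicalClosure
    have hvalS : ∀ x : (V →L[ℝ] V)ˣ, x ∈ G' → (x : V →L[ℝ] V) ∈ S := by
      rintro - ⟨g, hg, rfl⟩
      exact ⟨g, hg, rfl⟩
    have hmemS : ∀ x : (V →L[ℝ] V)ˣ, x ∈ H → (x : V →L[ℝ] V) ∈ closure S := by
      intro x hx
      have hx' : x ∈ closure (G' : Set (V →L[ℝ] V)ˣ) := by
        rwa [← Subgroup.topologicalClosure_coe]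
      exact map_mem_closure Units.continuous_val hx' hvalS
    have hCmap : ∀ a ∈ closure S, ∀ c ∈ C, a c ∈ C := by
      intro a ha c hc
      have hmaps : MapsTo (fun A : V →L[ℝ] V => A c) S C := by
        rintro - ⟨g, hg, rfl⟩
        exact hmapC g hg c hc
      have := map_mem_closure (ContinuousLinearMap.apply ℝ V c).continuous ha hmaps
      rwa [hCclosed.closure_eq] at this
    -- `H` is a compact subgroup of the units
    have hHcomp : IsCompact (H : Set (V →L[ℝ] V)ˣ) := by
      have hrange : IsClosed (range (Units.embedProduct (V →L[ℝ] V))) := by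
        have hEq : range (Units.embedProduct (V →L[ℝ] V)) =
            {p : (V →L[ℝ] V) × (V →L[ℝ] V)ᵐᵒᵖ |
              p.1 * p.2.unop = 1 ∧ p.2.unop * p.1 = 1} := by
          ext p
          constructor
          · rintro ⟨x, rfl⟩
            constructor
            · simp [Units.embedProduct]
            · simp [Units.embedProduct]
          · rintro ⟨hp1, hp2⟩
            exact ⟨⟨p.1, p.2.unop, hp1, hp2⟩, Prod.ext rfl (MulOpposite.op_unop _)⟩
        rw [hEq]
        exact (isClosed_eq (continuous_fst.mul
            (MulOpposite.continuous_unop.comp continuous_snd)) continuous_const).inter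
          (isClosed_eq ((MulOpposite.continuous_unop.comp continuous_snd).mul
            continuous_fst) continuous_const)
      have hCE : IsClosedEmbedding (Units.embedProduct (V →L[ℝ] V)) :=
        ⟨Units.isEmbedding_embedProduct, hrange⟩
      have hK2 : IsCompact ((closure S) ×ˢ (MulOpposite.op '' closure S)) :=
        h2.prod (h2.image MulOpposite.continuous_op)
      have hpre : IsCompact (Units.embedProduct (V →L[ℝ] V) ⁻¹'
          ((closure S) ×ˢ (MulOpposite.op '' closure S))) :=
        hCE.isCompact_preimage hK2
      refine IsCompact.of_isClosed_subset hpre G'.isClosed_topologicalClosure ?_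
      intro x hx
      have hx1 : (x : V →L[ℝ] V) ∈ closure S := hmemS x hx
      have hx2 : ((x⁻¹ : (V →L[ℝ] V)ˣ) : V →L[ℝ] V) ∈ closure S := hmemS _ (H.inv_mem hx)
      simp only [mem_preimage, Units.embedProduct_apply, Set.mem_prod]
      exact ⟨hx1, mem_image_of_mem _ hx2⟩
    haveI : CompactSpace H := isCompact_iff_compactSpace.mp hHcomp
    letI : MeasurableSpace H := borel H
    haveI : BorelSpace H := ⟨rfl⟩
    let K₀ : TopologicalSpace.PositiveCompacts H :=
      ⟨⟨univ, isCompact_univ⟩, by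
        show (interior (univ : Set ↥H)).Nonempty
        rw [interior_univ]
        exact ⟨1, trivial⟩⟩
    let μ : MeasureTheory.Measure H := MeasureTheory.Measure.haarMeasure K₀
    haveI hμinv : μ.IsMulLeftInvariant :=
      MeasureTheory.Measure.isMulLeftInvariant_haarMeasure K₀
    haveI hμfin : MeasureTheory.IsFiniteMeasure μ := MeasureTheory.CompactSpace.isFiniteMeasure
    haveI hμne : NeZero μ := by
      refine ⟨fun h0 => ?_⟩
      have h1 : μ (K₀ : Set H) = 1 := MeasureTheory.Measure.haarMeasure_self
      rw [h0] at h1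
      simp at h1
    let f : H → V := fun h => ((h : (V →L[ℝ] V)ˣ) : V →L[ℝ] V) v₀
    have hfc : Continuous f :=
      (ContinuousLinearMap.apply ℝ V v₀).continuous.comp
        (Units.continuous_val.comp continuous_subtype_val)
    have hfint : MeasureTheory.Integrable f μ := by
      refine hfc.integrable_of_hasCompactSupport ?_
      exact IsCompact.of_isClosed_subset isCompact_univ (isClosed_tsupport f) (subset_univ _)
    have hrangef : ∀ h : H, f h ∈ interior C := by
      intro h
      let e : V ≃L[ℝ] V := ContinuousLinearEquiv.unitsEquiv ℝ V (h : (V →L[ℝ] V)ˣ)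
      have heC : e '' C = C := by
        apply Subset.antisymm
        · rintro - ⟨c, hc, rfl⟩
          exact hCmap _ (hmemS _ h.2) c hc
        · intro c hc
          refine ⟨e.symm c, ?_, e.apply_symm_apply c⟩
          exact hCmap _ (hmemS _ (H.inv_mem h.2)) c hc
      have hint : e '' interior C = interior C := by
        have h1 := e.toHomeomorph.image_interior C
        rw [ContinuousLinearEquiv.coe_toHomeomorph] at h1
        rw [h1, heC]
      have : e v₀ ∈ e '' interior C := mem_image_of_mem _ hv₀
      rw [hint] at this
      exact this
    have hwmem : (⨍ h, f h ∂μ) ∈ interior C := by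
      obtain ⟨δ, hδ, hδsub⟩ := (isCompact_range hfc).exists_thickening_subset_open
        isOpen_interior (range_subset_iff.mpr hrangef)
      have hball : ∀ x : V, ‖x‖ < δ → (⨍ h, f h ∂μ) + x ∈ C := by
        intro x hx
        have hmem : ∀ h : H, f h + x ∈ C := fun h =>
          interior_subset (hδsub (Metric.mem_thickening_iff.mpr
            ⟨f h, mem_range_self h, by simpa [dist_eq_norm, add_sub_cancel_left] using hx⟩))
        have hint2 : MeasureTheory.Integrable (fun h => f h + x) μ :=
          hfint.add (MeasureTheory.integrable_const x)
        have havg := hCconv.average_mem hCclosed (Filter.Eventually.of_forall hmem) hint2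
        have hc0 : (μ univ).toReal ≠ 0 := by
          refine ENNReal.toReal_ne_zero.mpr ⟨?_, MeasureTheory.measure_ne_top μ univ⟩
          exact MeasureTheory.Measure.measure_univ_ne_zero.mpr hμne.out
        have heq : (⨍ h, f h + x ∂μ) = (⨍ h, f h ∂μ) + x := by
          rw [MeasureTheory.average_eq, MeasureTheory.average_eq,
            MeasureTheory.integral_add hfint (MeasureTheory.integrable_const x),
            MeasureTheory.integral_const, smul_add, smul_smul,
            inv_mul_cancel₀ (show μ.real univ ≠ 0 from hc0), one_smul]
        rwa [heq] at havg
      refine mem_interior.mpr ⟨Metric.ball (⨍ h, f h ∂μ) δ, fun y hy => ?_,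
        Metric.isOpen_ball, Metric.mem_ball_self hδ⟩
      have := hball (y - (⨍ h, f h ∂μ)) (by
        rw [Metric.mem_ball, dist_eq_norm] at hy
        simpa using hy)
      simpa using this
    refine ⟨⨍ h, f h ∂μ, hwmem, fun g hg => ?_⟩
    have hgumem : ι g ∈ H :=
      Subgroup.le_topologicalClosure G' (Subgroup.mem_map_of_mem ι.toMonoidHom hg)
    set gu : ↥H := ⟨ι g, hgumem⟩ with hgu
    have hcomp : ∀ h : H, f (gu * h) = (g : V ≃L[ℝ] V) (f h) := fun h => rfl
    calc (g : V ≃L[ℝ] V) (⨍ h, f h ∂μ)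
        = (μ univ).toReal⁻¹ • (g : V ≃L[ℝ] V) (∫ h, f h ∂μ) := by
          rw [MeasureTheory.average_eq, map_smul]; rfl
      _ = (μ univ).toReal⁻¹ • (∫ h, (g : V ≃L[ℝ] V) (f h) ∂μ) := by
          rw [ContinuousLinearEquiv.integral_comp_comm]
      _ = (μ univ).toReal⁻¹ • (∫ h, f (gu * h) ∂μ) := by
          simp_rw [hcomp]
      _ = (μ univ).toReal⁻¹ • (∫ h, f h ∂μ) := by
          rw [MeasureTheory.integral_mul_left_eq_self f gu]
      _ = ⨍ h, f h ∂μ := by rw [MeasureTheory.average_eq]; rfl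
  tfae_finish
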